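/- In the proposal process with parameters K, L, M, atomless signal distributions D, D', and proposal-rate vector x ∈ [0,1]^K, let A_i denote the (random) number of accepted type-i proposals and f_i(x)·n = E[A_i]. Then for every ε > 0, the probability that |A_i − f_i(x)·n| ≥ εn for some i ∈ {1,…,K} tends to 0 as n → ∞; i.e., with probability 1 − o(1), simultaneously for every i, the number of accepted type-i proposals is within o(n) of its expectation. -/

import Mathlib

open MeasureTheory
open scoped ENNReal

noncomputable section

/-- Uniform probability measure on a finite type. -/
def unifFin (α : Type*) [Fintype α] [MeasurableSpace α] : Measure α :=
  (Fintype.card α : ℝ≥0∞)⁻¹ • Measure.count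

/-- Index set of the proposals: for each type `i ∈ {1, …, K}` (represented by
`i : Fin K`, so `i = 0` means type `1`), there are `⌊x_i n⌋` proposals of type `i`. -/
abbrev PropIdx (K n : ℕ) (x : Fin K → ℝ) : Type := (i : Fin K) × Fin ⌊x i * n⌋₊

/-- Sample space of the proposal process: each proposal independently gets a uniformly
random target among the `M n` universities together with the independent signal that
this university observes for it. -/
abbrev PropSpace (K M n : ℕ) (x : Fin K → ℝ) : Type :=
  PropIdx K n x → Fin (M * n) × ℝ

/-- The distribution of the proposal process: targets are independent and uniform, and
signals are independent, drawn from `D` for type-1 proposals and `D'` otherwise. -/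
def propMeasure (K M n : ℕ) (D D' : Measure ℝ)
    [IsProbabilityMeasure D] [IsProbabilityMeasure D'] (x : Fin K → ℝ) :
    Measure (PropSpace K M n x) :=
  Measure.pi fun p : PropIdx K n x =>
    (unifFin (Fin (M * n))).prod (if (p.1 : ℕ) = 0 then D else D')

/-- Proposal `p` is accepted: its target university received fewer than `L` proposals
with a strictly higher signal (each university accepts its `L` highest-signal
proposals; ties almost surely do not occur). -/
def PropAccepted (L : ℕ) {K M n : ℕ} {x : Fin K → ℝ} (ω : PropSpace K M n x)
    (p : PropIdx K n x) : Prop :=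
  (Finset.univ.filter fun q : PropIdx K n x =>
    (ω q).1 = (ω p).1 ∧ (ω p).2 < (ω q).2).card < L

open scoped Classical in
/-- The number of accepted type-`i` proposals. -/
noncomputable def Anum (L : ℕ) {K M n : ℕ} {x : Fin K → ℝ} (i : Fin K)
    (ω : PropSpace K M n x) : ℕ :=
  (Finset.univ.filter fun p : PropIdx K n x => p.1 = i ∧ PropAccepted L ω p).card

end

/-! ### Auxiliary machinery for the proof -/

noncomputable section ConcAux

open MeasureTheory Filter Function
open scoped ENNReal

variable {γ : Type*} [MeasurableSpace γ]

/-- Reindexing a function space is measurable. -/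
lemma measurable_comp_pi {ι κ : Type*} (g : ι → κ) :
    Measurable fun (θ : κ → γ) (j : ι) => θ (g j) :=
  measurable_pi_lambda _ fun j => measurable_pi_apply (g j)

/-- Pushing forward a finite product of probability measures along an injective
reindexing gives the corresponding product measure. -/
lemma map_pi_comp {ι κ : Type*} [Fintype ι] [Fintype κ]
    (ν : κ → Measure γ) [∀ i, IsProbabilityMeasure (ν i)]
    {g : ι → κ} (hg : Function.Injective g) :
    (Measure.pi ν).map (fun θ j => θ (g j)) = Measure.pi (fun j => ν (g j)) := by
  classical
  refine (Measure.pi_eq fun s hs => ?_).symm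
  rw [Measure.map_apply (measurable_comp_pi g) (MeasurableSet.univ_pi hs)]
  have hpre : (fun (θ : κ → γ) (j : ι) => θ (g j)) ⁻¹' Set.pi Set.univ s
      = Set.pi Set.univ fun i => ⋂ (j : ι) (_ : g j = i), s j := by
    ext θ
    simp only [Set.mem_preimage, Set.mem_univ_pi, Set.mem_iInter]
    exact ⟨fun h i j hj => hj ▸ h j, fun h j => h (g j) j rfl⟩
  rw [hpre, Measure.pi_pi]
  have ht : ∀ j : ι, (⋂ (j' : ι) (_ : g j' = g j), s j') = s j := by
    intro j
    refine Set.Subset.antisymm (Set.iInter₂_subset (s := fun j' (_ : g j' = g j) => s j') j rfl) ?_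
    intro y hy
    simp only [Set.mem_iInter]
    intro j' hj'
    rw [hg hj']
    exact hy
  have huniv : ∀ i : κ, i ∉ Finset.univ.image g →
      (⋂ (j : ι) (_ : g j = i), s j) = Set.univ := by
    intro i hi
    rw [Set.iInter_eq_univ]
    intro j
    rw [Set.iInter_eq_univ]
    intro hj
    exact absurd (Finset.mem_image.mpr ⟨j, Finset.mem_univ j, hj⟩) hi
  calc ∏ i : κ, ν i (⋂ (j : ι) (_ : g j = i), s j)
      = ∏ i ∈ Finset.univ.image g, ν i (⋂ (j : ι) (_ : g j = i), s j) := by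
        refine (Finset.prod_subset (Finset.subset_univ _) ?_).symm
        intro i _ hi
        rw [huniv i hi]
        exact measure_univ
    _ = ∏ j : ι, ν (g j) (⋂ (j' : ι) (_ : g j' = g j), s j') :=
        Finset.prod_image (fun a _ b _ h => hg h)
    _ = ∏ j : ι, ν (g j) (s j) := Finset.prod_congr rfl fun j _ => by rw [ht j]

variable {ι : Type*}

/-- Selection of coordinates: coordinate `j` is taken from the second copy iff `s j`. -/
def gsel (s : ι → Bool) (j : ι) : ι ⊕ ι := if s j then Sum.inr j else Sum.inl j

lemma gsel_injective (s : ι → Bool) : Function.Injective (gsel s) := by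
  intro a b h
  unfold gsel at h
  by_cases ha : s a <;> by_cases hb : s b <;> simp [ha, hb] at h <;> exact h

/-- The configuration obtained by selecting coordinates according to `s`. -/
def pickSel (s : ι → Bool) (θ : ι ⊕ ι → γ) : ι → γ := fun j => θ (gsel s j)

lemma measurable_pickSel (s : ι → Bool) : Measurable (pickSel (γ := γ) s) :=
  measurable_comp_pi _

lemma map_pickSel [Fintype ι] (μ : ι → Measure γ) [∀ i, IsProbabilityMeasure (μ i)]
    (s : ι → Bool) :
    (Measure.pi (Sum.elim μ μ)).map (pickSel s) = Measure.pi μ := by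
  haveI : ∀ a : ι ⊕ ι, IsProbabilityMeasure (Sum.elim μ μ a) := fun a => by
    cases a <;> (dsimp only [Sum.elim_inl, Sum.elim_inr]; infer_instance)
  rw [show pickSel (γ := γ) s = fun θ j => θ (gsel s j) from rfl,
    map_pi_comp _ (gsel_injective s)]
  congr 1
  funext j
  unfold gsel
  by_cases h : s j <;> simp [h]

lemma pickSel_swap [DecidableEq ι] (s : ι → Bool) (k : ι) (θ : ι ⊕ ι → γ) :
    pickSel s (fun a => θ (Equiv.swap (Sum.inl k) (Sum.inr k) a))
      = pickSel (Function.update s k (!s k)) θ := by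
  funext j
  unfold pickSel gsel
  by_cases hj : j = k
  · subst hj
    by_cases h : s j <;>
      simp [h, Function.update_self, Equiv.swap_apply_left, Equiv.swap_apply_right]
  · have h1 : (if s j then (Sum.inr j : ι ⊕ ι) else Sum.inl j) ≠ Sum.inl k := by
      by_cases h : s j <;> simp [h, hj]
    have h2 : (if s j then (Sum.inr j : ι ⊕ ι) else Sum.inl j) ≠ Sum.inr k := by
      by_cases h : s j <;> simp [h, hj]
    rw [Function.update_of_ne hj]
    exact congrArg θ (Equiv.swap_apply_of_ne_of_ne h1 h2)

lemma measurePreserving_swapCoord [Fintype ι] [DecidableEq ι] (μ : ι → Measure γ)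
    [∀ i, IsProbabilityMeasure (μ i)] (k : ι) :
    MeasurePreserving (fun (θ : ι ⊕ ι → γ) a => θ (Equiv.swap (Sum.inl k) (Sum.inr k) a))
      (Measure.pi (Sum.elim μ μ)) (Measure.pi (Sum.elim μ μ)) := by
  haveI : ∀ a : ι ⊕ ι, IsProbabilityMeasure (Sum.elim μ μ a) := fun a => by
    cases a <;> (dsimp only [Sum.elim_inl, Sum.elim_inr]; infer_instance)
  refine ⟨measurable_comp_pi _, ?_⟩
  rw [map_pi_comp _ (Equiv.swap (Sum.inl k) (Sum.inr k)).injective]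
  congr 1
  funext a
  rcases a with j | j
  · by_cases hj : j = k
    · subst hj; simp [Equiv.swap_apply_left]
    · rw [Equiv.swap_apply_of_ne_of_ne (by simp [hj]) (by simp)]
  · by_cases hj : j = k
    · subst hj; simp [Equiv.swap_apply_right]
    · rw [Equiv.swap_apply_of_ne_of_ne (by simp) (by simp [hj])]

lemma integrable_of_bdd {Ω : Type*} [MeasurableSpace Ω] {P : Measure Ω} [IsFiniteMeasure P]
    {g : Ω → ℝ} {C : ℝ} (hg : Measurable g) (h : ∀ ω, |g ω| ≤ C) : Integrable g P :=
  (integrable_const C).mono' hg.aestronglyMeasurable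
    (Eventually.of_forall fun ω => by simpa [Real.norm_eq_abs] using h ω)

/-- Efron–Stein-type variance bound for a bounded function of finitely many
independent random variables, under an a.e. bounded-difference hypothesis. -/
theorem efron_stein [Fintype ι] [DecidableEq ι] (μ : ι → Measure γ)
    [∀ i, IsProbabilityMeasure (μ i)] (f : (ι → γ) → ℝ) (hf : Measurable f)
    (B : ℝ) (hB : ∀ v, |f v| ≤ B) (c : ℝ) (hc : 0 ≤ c)
    (hbd : ∀ᵐ θ ∂Measure.pi (Sum.elim μ μ), ∀ (s s' : ι → Bool) (k : ι),
      (∀ j, j ≠ k → s j = s' j) → |f (pickSel s θ) - f (pickSel s' θ)| ≤ c) :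
    (∫ v, f v ^ 2 ∂Measure.pi μ) - (∫ v, f v ∂Measure.pi μ) ^ 2
      ≤ (Fintype.card ι : ℝ) * c ^ 2 / 2 := by
  haveI hprob : ∀ a : ι ⊕ ι, IsProbabilityMeasure (Sum.elim μ μ a) := fun a => by
    cases a <;> (dsimp only [Sum.elim_inl, Sum.elim_inr]; infer_instance)
  set ν := Measure.pi (Sum.elim μ μ) with hν
  haveI : IsProbabilityMeasure ν := by rw [hν]; infer_instance
  have hB0 : 0 ≤ B := by
    have hne : Nonempty (ι → γ) := by
      by_contra h
      have h1 : (Set.univ : Set (ι → γ)) = ∅ := by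
        simp [Set.univ_eq_empty_iff, not_nonempty_iff.mp h]
      have h2 := measure_univ (μ := Measure.pi μ)
      rw [h1, measure_empty] at h2
      exact one_ne_zero h2.symm
    obtain ⟨v⟩ := hne
    exact (abs_nonneg _).trans (hB v)
  set N := Fintype.card ι with hN
  set e := Fintype.equivFin ι with he
  set sel : ℕ → ι → Bool := fun m j => decide ((e j : ℕ) < m) with hsel
  set F : ℕ → (ι ⊕ ι → γ) → ℝ := fun m θ => f (pickSel (sel m) θ) with hF
  have hFmeas : ∀ m, Measurable (F m) := fun m => hf.comp (measurable_pickSel _)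
  have hFbd : ∀ m θ, |F m θ| ≤ B := fun m θ => hB _
  have hlaw : ∀ s : ι → Bool, ν.map (pickSel s) = Measure.pi μ := map_pickSel μ
  have hInt2 : ∀ m m', Integrable (fun θ => F m θ * F m' θ) ν := fun m m' =>
    integrable_of_bdd (C := B * B) ((hFmeas m).mul (hFmeas m')) (fun θ => by
      rw [abs_mul]; exact mul_le_mul (hFbd _ _) (hFbd _ _) (abs_nonneg _) hB0)
  -- the two endpoint integrals
  have key0 : ∫ θ, F 0 θ * F 0 θ ∂ν = ∫ v, f v ^ 2 ∂Measure.pi μ := by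
    have h : ∫ v, f v ^ 2 ∂(ν.map (pickSel (sel 0))) = ∫ θ, f (pickSel (sel 0) θ) ^ 2 ∂ν :=
      integral_map (measurable_pickSel (γ := γ) (sel 0)).aemeasurable
        ((hf.pow_const 2).aestronglyMeasurable)
    rw [hlaw (sel 0)] at h
    rw [h]
    exact integral_congr_ae (Eventually.of_forall fun θ => by simp [hF, pow_two])
  have hx0 : ∀ θ : ι ⊕ ι → γ, pickSel (sel 0) θ = fun j => θ (Sum.inl j) := by
    intro θ; funext j; simp [pickSel, gsel, hsel]
  have hxN : ∀ θ : ι ⊕ ι → γ, pickSel (sel N) θ = fun j => θ (Sum.inr j) := by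
    intro θ; funext j; simp [pickSel, gsel, hsel, show (e j : ℕ) < N from (e j).isLt]
  have key1 : ∫ θ, F 0 θ * F N θ ∂ν = (∫ v, f v ∂Measure.pi μ) ^ 2 := by
    have hmp := measurePreserving_sumPiEquivProdPi (X := fun _ : ι ⊕ ι => γ) (Sum.elim μ μ)
    have hEq : (Measure.pi fun i => Sum.elim μ μ (Sum.inl i)).prod
        (Measure.pi fun i => Sum.elim μ μ (Sum.inr i)) = (Measure.pi μ).prod (Measure.pi μ) := rfl
    rw [hEq] at hmp
    have hint := hmp.integral_comp'
      (f := MeasurableEquiv.sumPiEquivProdPi (fun _ : ι ⊕ ι => γ))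
      (g := fun z : (ι → γ) × (ι → γ) => f z.1 * f z.2)
    calc ∫ θ, F 0 θ * F N θ ∂ν
        = ∫ θ, (fun z : (ι → γ) × (ι → γ) => f z.1 * f z.2)
            ((MeasurableEquiv.sumPiEquivProdPi (fun _ : ι ⊕ ι => γ)) θ) ∂ν := by
          refine integral_congr_ae (Eventually.of_forall fun θ => ?_)
          simp only [hF, hx0 θ, hxN θ]
          rfl
      _ = ∫ z : (ι → γ) × (ι → γ), f z.1 * f z.2 ∂(Measure.pi μ).prod (Measure.pi μ) := hint
      _ = (∫ v, f v ∂Measure.pi μ) ^ 2 := by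
          rw [integral_prod_mul (f := f) (g := f), pow_two]
  -- the one-step bound
  have hstep : ∀ k, k < N → (∫ θ, F 0 θ * F k θ ∂ν) - (∫ θ, F 0 θ * F (k + 1) θ ∂ν)
      ≤ c ^ 2 / 2 := by
    intro k hk
    set j₀ := e.symm ⟨k, hk⟩ with hj₀
    have hej : (e j₀ : ℕ) = k := by rw [hj₀]; simp
    have hejne : ∀ j, j ≠ j₀ → (e j : ℕ) ≠ k := by
      intro j hj h
      apply hj
      have h1 : e j = ⟨k, hk⟩ := Fin.ext h
      rw [hj₀, ← h1, Equiv.symm_apply_apply]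
    set σ : (ι ⊕ ι → γ) → ι ⊕ ι → γ :=
      fun θ a => θ (Equiv.swap (Sum.inl j₀) (Sum.inr j₀) a) with hσ
    have hmpσ := measurePreserving_swapCoord μ j₀
    have hup0 : Function.update (sel 0) j₀ (!(sel 0 j₀)) = fun j => decide (j = j₀) := by
      funext j
      by_cases hj : j = j₀
      · subst hj; simp [Function.update_self, hsel]
      · simp [Function.update_of_ne hj, hsel, hj]
    have hupk : Function.update (sel k) j₀ (!(sel k j₀)) = sel (k + 1) := by
      funext j
      by_cases hj : j = j₀
      · subst hj; simp [Function.update_self, hsel, hej]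
      · rw [Function.update_of_ne hj]
        simp only [hsel]
        rw [decide_eq_decide]
        have := hejne j hj
        omega
    have hupk1 : Function.update (sel (k + 1)) j₀ (!(sel (k + 1) j₀)) = sel k := by
      funext j
      by_cases hj : j = j₀
      · subst hj; simp [Function.update_self, hsel, hej]
      · rw [Function.update_of_ne hj]
        simp only [hsel]
        rw [decide_eq_decide]
        have := hejne j hj
        omega
    have hcomp : ∀ m θ, F m (σ θ) = f (pickSel (Function.update (sel m) j₀ (!(sel m j₀))) θ) := by
      intro m θ
      simp only [hF, hσ]
      rw [pickSel_swap]
    set s1 : ι → Bool := fun j => decide (j = j₀) with hs1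
    set G : (ι ⊕ ι → γ) → ℝ := fun θ => f (pickSel s1 θ) with hG
    have hGmeas : Measurable G := hf.comp (measurable_pickSel _)
    have hGbd : ∀ θ, |G θ| ≤ B := fun θ => hB _
    have hswap : ∫ θ, F 0 θ * F k θ - F 0 θ * F (k + 1) θ ∂ν
        = ∫ θ, G θ * F (k + 1) θ - G θ * F k θ ∂ν := by
      have hmeas : Measurable fun θ => F 0 θ * F k θ - F 0 θ * F (k + 1) θ :=
        ((hFmeas 0).mul (hFmeas k)).sub ((hFmeas 0).mul (hFmeas (k + 1)))
      calc ∫ θ, F 0 θ * F k θ - F 0 θ * F (k + 1) θ ∂ν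
          = ∫ θ, F 0 θ * F k θ - F 0 θ * F (k + 1) θ ∂(ν.map σ) := by rw [hmpσ.map_eq]
        _ = ∫ θ, F 0 (σ θ) * F k (σ θ) - F 0 (σ θ) * F (k + 1) (σ θ) ∂ν :=
            integral_map hmpσ.measurable.aemeasurable hmeas.aestronglyMeasurable
        _ = ∫ θ, G θ * F (k + 1) θ - G θ * F k θ ∂ν := by
            refine integral_congr_ae (Eventually.of_forall fun θ => ?_)
            show F 0 (σ θ) * F k (σ θ) - F 0 (σ θ) * F (k + 1) (σ θ)
              = G θ * F (k + 1) θ - G θ * F k θ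
            rw [hcomp 0 θ, hcomp k θ, hcomp (k + 1) θ, hup0, hupk, hupk1]
    have hdiffInt : Integrable (fun θ => F 0 θ * F k θ - F 0 θ * F (k + 1) θ) ν :=
      (hInt2 0 k).sub (hInt2 0 (k + 1))
    have hGInt : ∀ m, Integrable (fun θ => G θ * F m θ) ν := fun m =>
      integrable_of_bdd (C := B * B) (hGmeas.mul (hFmeas m)) fun θ => by
        rw [abs_mul]; exact mul_le_mul (hGbd θ) (hFbd m θ) (abs_nonneg _) hB0
    have h2A : (∫ θ, F 0 θ * F k θ - F 0 θ * F (k + 1) θ ∂ν) * 2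
        = ∫ θ, (F 0 θ - G θ) * (F k θ - F (k + 1) θ) ∂ν := by
      have hdiffInt2 : Integrable (fun θ => G θ * F (k + 1) θ - G θ * F k θ) ν :=
        (hGInt (k + 1)).sub (hGInt k)
      rw [mul_two]
      nth_rewrite 2 [hswap]
      rw [← integral_add hdiffInt hdiffInt2]
      refine integral_congr_ae (Eventually.of_forall fun θ => ?_)
      ring
    have habs2 : ∀ {a b : ℝ}, |a| ≤ B → |b| ≤ B → |a - b| ≤ B + B := by
      intro a b ha hb
      have h1 := abs_le.mp ha
      have h2 := abs_le.mp hb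
      exact abs_le.mpr ⟨by linarith, by linarith⟩
    have hae : ∀ᵐ θ ∂ν, (F 0 θ - G θ) * (F k θ - F (k + 1) θ) ≤ c ^ 2 := by
      filter_upwards [hbd] with θ hθ
      have h1 : |F 0 θ - G θ| ≤ c := by
        refine hθ (sel 0) s1 j₀ fun j hj => ?_
        simp [hsel, hs1, hj]
      have h2 : |F k θ - F (k + 1) θ| ≤ c := by
        refine hθ (sel k) (sel (k + 1)) j₀ fun j hj => ?_
        rw [← hupk, Function.update_of_ne hj]
      calc (F 0 θ - G θ) * (F k θ - F (k + 1) θ)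
          ≤ |(F 0 θ - G θ) * (F k θ - F (k + 1) θ)| := le_abs_self _
        _ = |F 0 θ - G θ| * |F k θ - F (k + 1) θ| := abs_mul _ _
        _ ≤ c * c := mul_le_mul h1 h2 (abs_nonneg _) hc
        _ = c ^ 2 := (sq c).symm
    have hABound : ∫ θ, (F 0 θ - G θ) * (F k θ - F (k + 1) θ) ∂ν ≤ c ^ 2 := by
      have hIntProd : Integrable (fun θ => (F 0 θ - G θ) * (F k θ - F (k + 1) θ)) ν := by
        refine integrable_of_bdd (C := (B + B) * (B + B))
          (((hFmeas 0).sub hGmeas).mul ((hFmeas k).sub (hFmeas (k + 1)))) fun θ => ?_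
        rw [abs_mul]
        exact mul_le_mul (habs2 (hFbd 0 θ) (hGbd θ)) (habs2 (hFbd k θ) (hFbd (k + 1) θ))
          (abs_nonneg _) (by linarith)
      have h := integral_mono_ae hIntProd (integrable_const (c ^ 2)) hae
      simpa using h
    have hA : ∫ θ, F 0 θ * F k θ ∂ν - ∫ θ, F 0 θ * F (k + 1) θ ∂ν
        = ∫ θ, F 0 θ * F k θ - F 0 θ * F (k + 1) θ ∂ν :=
      (integral_sub (hInt2 0 k) (hInt2 0 (k + 1))).symm
    rw [hA]
    linarith [h2A, hABound]
  -- telescoping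
  have htel : ∑ k ∈ Finset.range N,
      ((∫ θ, F 0 θ * F k θ ∂ν) - (∫ θ, F 0 θ * F (k + 1) θ ∂ν))
      = (∫ θ, F 0 θ * F 0 θ ∂ν) - ∫ θ, F 0 θ * F N θ ∂ν :=
    Finset.sum_range_sub' (fun m => ∫ θ, F 0 θ * F m θ ∂ν) N
  have hsum : (∫ θ, F 0 θ * F 0 θ ∂ν) - (∫ θ, F 0 θ * F N θ ∂ν) ≤ (N : ℝ) * (c ^ 2 / 2) := by
    rw [← htel]
    calc ∑ k ∈ Finset.range N, ((∫ θ, F 0 θ * F k θ ∂ν) - (∫ θ, F 0 θ * F (k + 1) θ ∂ν))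
        ≤ ∑ _k ∈ Finset.range N, c ^ 2 / 2 :=
          Finset.sum_le_sum fun k hk => hstep k (Finset.mem_range.mp hk)
      _ = (N : ℝ) * (c ^ 2 / 2) := by
          rw [Finset.sum_const, Finset.card_range, nsmul_eq_mul]
  rw [key0, key1] at hsum
  calc (∫ v, f v ^ 2 ∂Measure.pi μ) - (∫ v, f v ∂Measure.pi μ) ^ 2
      ≤ (N : ℝ) * (c ^ 2 / 2) := hsum
    _ = (Fintype.card ι : ℝ) * c ^ 2 / 2 := by rw [hN]; ring

/-- Chebyshev's inequality for a bounded measurable function, with the variance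
expressed as `E[f²] − (E f)²`. -/
lemma chebyshev_bdd {Ω : Type*} [MeasurableSpace Ω] (P : Measure Ω) [IsProbabilityMeasure P]
    (f : Ω → ℝ) (hf : Measurable f) (B : ℝ) (hB : ∀ ω, |f ω| ≤ B)
    {a V : ℝ} (ha : 0 < a) (hV : (∫ ω, f ω ^ 2 ∂P) - (∫ ω, f ω ∂P) ^ 2 ≤ V) :
    P {ω | a ≤ |f ω - ∫ ω', f ω' ∂P|} ≤ ENNReal.ofReal (V / a ^ 2) := by
  have hmem : MemLp f 2 P := MemLp.of_bound hf.aestronglyMeasurable B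
    (Eventually.of_forall fun ω => by simpa [Real.norm_eq_abs] using hB ω)
  have h1 := ProbabilityTheory.meas_ge_le_variance_div_sq (μ := P) hmem ha
  refine h1.trans (ENNReal.ofReal_le_ofReal ?_)
  have hvar : ProbabilityTheory.variance f P ≤ V := by
    rw [ProbabilityTheory.variance_eq_sub hmem]
    simpa [Pi.pow_apply] using hV
  exact (div_le_div_iff_of_pos_right (pow_pos ha 2)).mpr hvar

/-- For a product of measures whose second marginals are atomless, two distinct
coordinates a.s. have different second components. -/
lemma pair_null {κ : Type*} [Fintype κ] {γ₀ : Type*} [MeasurableSpace γ₀]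
    (ν : κ → Measure (γ₀ × ℝ)) [∀ i, IsProbabilityMeasure (ν i)]
    (hν : ∀ i t, ν i {y | y.2 = t} = 0) {a b : κ} (hab : a ≠ b) :
    Measure.pi ν {θ | (θ a).2 = (θ b).2} = 0 := by
  classical
  set g : Fin 2 → κ := fun j => if j = 0 then a else b with hg
  have hg0 : g 0 = a := if_pos rfl
  have hg1 : g 1 = b := if_neg (by decide)
  have hginj : Function.Injective g := by
    intro u v huv
    simp only [hg] at huv
    by_cases hu : u = 0 <;> by_cases hv : v = 0
    · rw [hu, hv]
    · rw [if_pos hu, if_neg hv] at huv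
      exact absurd huv hab
    · rw [if_neg hu, if_pos hv] at huv
      exact absurd huv.symm hab
    · have hu' : (u : ℕ) ≠ 0 := fun h => hu (Fin.ext h)
      have hv' : (v : ℕ) ≠ 0 := fun h => hv (Fin.ext h)
      have h2u := u.isLt
      have h2v := v.isLt
      exact Fin.ext (by omega)
  have hmap := map_pi_comp (γ := γ₀ × ℝ) ν hginj
  have hAmeas : MeasurableSet {η : Fin 2 → γ₀ × ℝ | (η 0).2 = (η 1).2} :=
    measurableSet_eq_fun ((measurable_pi_apply (0 : Fin 2)).snd)
      ((measurable_pi_apply (1 : Fin 2)).snd)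
  have hpre : {θ : κ → γ₀ × ℝ | (θ a).2 = (θ b).2}
      = (fun θ (j : Fin 2) => θ (g j)) ⁻¹' {η | (η 0).2 = (η 1).2} := by
    ext θ
    simp only [Set.mem_setOf_eq, Set.mem_preimage, hg0, hg1]
  rw [hpre, ← Measure.map_apply (measurable_comp_pi g) hAmeas, hmap]
  haveI : ∀ j : Fin 2, IsProbabilityMeasure (ν (g j)) := fun j => inferInstance
  have hmp := measurePreserving_piFinSuccAbove (fun j : Fin 2 => ν (g j)) 0
  set Eqv := MeasurableEquiv.piFinSuccAbove (fun _ : Fin 2 => γ₀ × ℝ) 0 with hEqv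
  have hA' : MeasurableSet {z : (γ₀ × ℝ) × (Fin 1 → γ₀ × ℝ) | z.1.2 = (z.2 0).2} :=
    measurableSet_eq_fun (measurable_fst.snd)
      (((measurable_pi_apply (0 : Fin 1)).comp measurable_snd).snd)
  have hpre2 : {η : Fin 2 → γ₀ × ℝ | (η 0).2 = (η 1).2}
      = Eqv ⁻¹' {z | z.1.2 = (z.2 0).2} := by
    ext η
    simp [hEqv, MeasurableEquiv.piFinSuccAbove, Fin.tail]
  rw [hpre2, hmp.measure_preimage hA'.nullMeasurableSet, Measure.prod_apply hA']
  have hzero : ∀ y : γ₀ × ℝ,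
      (Measure.pi fun j : Fin 1 => ν (g ((0 : Fin 2).succAbove j)))
        (Prod.mk y ⁻¹' {z : (γ₀ × ℝ) × (Fin 1 → γ₀ × ℝ) | z.1.2 = (z.2 0).2}) = 0 := by
    intro y
    have hset : (Prod.mk y ⁻¹' {z : (γ₀ × ℝ) × (Fin 1 → γ₀ × ℝ) | z.1.2 = (z.2 0).2})
        = Set.pi Set.univ (fun _ : Fin 1 => {z : γ₀ × ℝ | z.2 = y.2}) := by
      ext η
      simp only [Set.mem_preimage, Set.mem_setOf_eq, Set.mem_univ_pi]
      constructor
      · intro h i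
        have : i = 0 := Subsingleton.elim i 0
        rw [this]
        exact h.symm
      · intro h
        exact (h 0).symm
    rw [hset, Measure.pi_pi]
    rw [Fin.prod_univ_one]
    exact hν _ _
  rw [lintegral_congr hzero, lintegral_zero]

lemma ae_inj_snd {κ : Type*} [Fintype κ] {γ₀ : Type*} [MeasurableSpace γ₀]
    (ν : κ → Measure (γ₀ × ℝ)) [∀ i, IsProbabilityMeasure (ν i)]
    (hν : ∀ i t, ν i {y | y.2 = t} = 0) :
    ∀ᵐ θ ∂Measure.pi ν, Function.Injective fun a => (θ a).2 := by
  have h : ∀ᵐ θ ∂Measure.pi ν, ∀ a, ∀ b, (θ a).2 = (θ b).2 → a = b := by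
    rw [ae_all_iff]
    intro a
    rw [ae_all_iff]
    intro b
    by_cases hab : a = b
    · exact Eventually.of_forall fun θ _ => hab
    · refine (ae_iff).mpr (measure_mono_null (fun θ hθ => ?_) (pair_null ν hν hab))
      have hθ' : ¬((θ a).2 = (θ b).2 → a = b) := hθ
      exact (Classical.not_imp.mp hθ').1
  filter_upwards [h] with θ hθ a b hab
  exact hθ a b hab

end ConcAux

/-! ### Combinatorial bounded-difference lemma for `Anum` -/

noncomputable section Comb

open Finset

variable {K M n : ℕ} {x : Fin K → ℝ}

/-- The number of proposals with the same target as `p` and a strictly higher signal. -/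
def cnt (v : PropSpace K M n x) (p : PropIdx K n x) : ℕ :=
  (Finset.univ.filter fun r : PropIdx K n x => (v r).1 = (v p).1 ∧ (v p).2 < (v r).2).card

lemma propAccepted_iff (L : ℕ) (v : PropSpace K M n x) (p : PropIdx K n x) :
    PropAccepted L v p ↔ cnt v p < L := Iff.rfl

lemma cnt_lt_cnt (v : PropSpace K M n x) {p p' : PropIdx K n x}
    (ht : (v p).1 = (v p').1) (hs : (v p).2 < (v p').2) : cnt v p' < cnt v p := by
  have hnot : p' ∉ Finset.univ.filter
      fun r : PropIdx K n x => (v r).1 = (v p').1 ∧ (v p').2 < (v r).2 := by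
    simp [lt_irrefl]
  have hsub : insert p' (Finset.univ.filter
        fun r : PropIdx K n x => (v r).1 = (v p').1 ∧ (v p').2 < (v r).2)
      ⊆ Finset.univ.filter fun r : PropIdx K n x => (v r).1 = (v p).1 ∧ (v p).2 < (v r).2 := by
    intro r hr
    rcases Finset.mem_insert.mp hr with rfl | hr
    · exact Finset.mem_filter.mpr ⟨Finset.mem_univ _, ht.symm, hs⟩
    · obtain ⟨-, h1, h2⟩ := Finset.mem_filter.mp hr
      exact Finset.mem_filter.mpr ⟨Finset.mem_univ _, h1.trans ht.symm, hs.trans h2⟩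
  have hcard := Finset.card_le_card hsub
  rw [Finset.card_insert_of_notMem hnot] at hcard
  unfold cnt
  omega

lemma cnt_split (u : PropSpace K M n x) (p q : PropIdx K n x) :
    cnt u p = (Finset.univ.filter
        fun r : PropIdx K n x => r ≠ q ∧ ((u r).1 = (u p).1 ∧ (u p).2 < (u r).2)).card
      + (if (u q).1 = (u p).1 ∧ (u p).2 < (u q).2 then 1 else 0) := by
  unfold cnt
  by_cases h : (u q).1 = (u p).1 ∧ (u p).2 < (u q).2
  · rw [if_pos h]
    have hset : (Finset.univ.filter
          fun r : PropIdx K n x => (u r).1 = (u p).1 ∧ (u p).2 < (u r).2)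
        = insert q (Finset.univ.filter
          fun r : PropIdx K n x => r ≠ q ∧ ((u r).1 = (u p).1 ∧ (u p).2 < (u r).2)) := by
      ext r
      simp only [Finset.mem_insert, Finset.mem_filter, Finset.mem_univ, true_and]
      constructor
      · intro hr
        by_cases hrq : r = q
        · exact Or.inl hrq
        · exact Or.inr ⟨hrq, hr⟩
      · rintro (rfl | ⟨-, hr⟩)
        · exact h
        · exact hr
    rw [hset, Finset.card_insert_of_notMem (by simp)]
  · rw [if_neg h, add_zero]
    congr 1
    ext r
    simp only [Finset.mem_filter, Finset.mem_univ, true_and]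
    constructor
    · intro hr
      exact ⟨fun hrq => h (hrq ▸ hr), hr⟩
    · exact fun h' => h'.2

lemma anum_diff_le (L : ℕ) (i : Fin K) (v w : PropSpace K M n x) (q : PropIdx K n x)
    (hvw : ∀ p, p ≠ q → v p = w p)
    (hv : Function.Injective fun p => (v p).2)
    (hw : Function.Injective fun p => (w p).2) :
    |(Anum L i v : ℝ) - (Anum L i w : ℝ)| ≤ 3 := by
  set T1 : Finset (PropIdx K n x) := Finset.univ.filter
    (fun p => p ≠ q ∧ ((v q).1 = (v p).1 ∧ (v p).2 < (v q).2) ∧ cnt v p = L) with hT1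
  set T2 : Finset (PropIdx K n x) := Finset.univ.filter
    (fun p => p ≠ q ∧ ((w q).1 = (w p).1 ∧ (w p).2 < (w q).2) ∧ cnt w p = L) with hT2
  have hT1card : T1.card ≤ 1 := by
    rw [Finset.card_le_one]
    intro p hp p' hp'
    rw [hT1, Finset.mem_filter] at hp hp'
    obtain ⟨-, -, ⟨ht, hs⟩, hc⟩ := hp
    obtain ⟨-, -, ⟨ht', hs'⟩, hc'⟩ := hp'
    by_contra hne
    have hss : (v p).2 ≠ (v p').2 := fun h => hne (hv h)
    rcases hss.lt_or_gt with h | h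
    · have := cnt_lt_cnt v (ht.symm.trans ht') h
      omega
    · have := cnt_lt_cnt v (ht'.symm.trans ht) h
      omega
  have hT2card : T2.card ≤ 1 := by
    rw [Finset.card_le_one]
    intro p hp p' hp'
    rw [hT2, Finset.mem_filter] at hp hp'
    obtain ⟨-, -, ⟨ht, hs⟩, hc⟩ := hp
    obtain ⟨-, -, ⟨ht', hs'⟩, hc'⟩ := hp'
    by_contra hne
    have hss : (w p).2 ≠ (w p').2 := fun h => hne (hw h)
    rcases hss.lt_or_gt with h | h
    · have := cnt_lt_cnt w (ht.symm.trans ht') h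
      omega
    · have := cnt_lt_cnt w (ht'.symm.trans ht) h
      omega
  have hbase : ∀ p, p ≠ q →
      (Finset.univ.filter fun r : PropIdx K n x =>
        r ≠ q ∧ ((v r).1 = (v p).1 ∧ (v p).2 < (v r).2))
      = (Finset.univ.filter fun r : PropIdx K n x =>
        r ≠ q ∧ ((w r).1 = (w p).1 ∧ (w p).2 < (w r).2)) := by
    intro p hp
    apply Finset.filter_congr
    intro r _
    by_cases hrq : r = q
    · simp [hrq]
    · rw [hvw r hrq, hvw p hp]
  have hflip : ∀ p, p ≠ q → ¬(cnt v p < L ↔ cnt w p < L) → p ∈ T1 ∪ T2 := by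
    intro p hp hiff
    have h1 := cnt_split v p q
    have h2 := cnt_split w p q
    rw [hbase p hp] at h1
    by_cases hCv : (v q).1 = (v p).1 ∧ (v p).2 < (v q).2 <;>
      by_cases hCw : (w q).1 = (w p).1 ∧ (w p).2 < (w q).2
    · rw [if_pos hCv] at h1
      rw [if_pos hCw] at h2
      omega
    · rw [if_pos hCv] at h1
      rw [if_neg hCw] at h2
      have hcnt : cnt v p = L := by omega
      refine Finset.mem_union_left _ ?_
      rw [hT1, Finset.mem_filter]
      exact ⟨Finset.mem_univ _, hp, hCv, hcnt⟩
    · rw [if_neg hCv] at h1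
      rw [if_pos hCw] at h2
      have hcnt : cnt w p = L := by omega
      refine Finset.mem_union_right _ ?_
      rw [hT2, Finset.mem_filter]
      exact ⟨Finset.mem_univ _, hp, hCw, hcnt⟩
    · rw [if_neg hCv] at h1
      rw [if_neg hCw] at h2
      omega
  classical
  have hanum : ∀ u : PropSpace K M n x, Anum L i u
      = (Finset.univ.filter fun p : PropIdx K n x => p.1 = i ∧ cnt u p < L).card := by
    intro u
    unfold Anum
    congr 1
    exact Finset.filter_congr fun p _ => and_congr_right fun _ => propAccepted_iff L u p
  set Sv : Finset (PropIdx K n x) :=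
    Finset.univ.filter (fun p => p.1 = i ∧ cnt v p < L) with hSv
  set Sw : Finset (PropIdx K n x) :=
    Finset.univ.filter (fun p => p.1 = i ∧ cnt w p < L) with hSw
  have hsub1 : Sv \ Sw ⊆ insert q (T1 ∪ T2) := by
    intro p hp
    rw [Finset.mem_sdiff, hSv, hSw, Finset.mem_filter, Finset.mem_filter] at hp
    obtain ⟨⟨-, hpi, hpv⟩, hnw⟩ := hp
    by_cases hpq : p = q
    · exact Finset.mem_insert.mpr (Or.inl hpq)
    · refine Finset.mem_insert.mpr (Or.inr (hflip p hpq ?_))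
      intro hiff
      exact hnw ⟨Finset.mem_univ _, hpi, hiff.mp hpv⟩
  have hsub2 : Sw \ Sv ⊆ insert q (T1 ∪ T2) := by
    intro p hp
    rw [Finset.mem_sdiff, hSv, hSw, Finset.mem_filter, Finset.mem_filter] at hp
    obtain ⟨⟨-, hpi, hpw⟩, hnv⟩ := hp
    by_cases hpq : p = q
    · exact Finset.mem_insert.mpr (Or.inl hpq)
    · refine Finset.mem_insert.mpr (Or.inr (hflip p hpq ?_))
      intro hiff
      exact hnv ⟨Finset.mem_univ _, hpi, hiff.mpr hpw⟩
  have hcard3 : (insert q (T1 ∪ T2)).card ≤ 3 := by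
    have h1 := Finset.card_insert_le q (T1 ∪ T2)
    have h2 := Finset.card_union_le T1 T2
    omega
  have h1 : Sv.card ≤ Sw.card + 3 := by
    have ha := Finset.card_le_card_sdiff_add_card (s := Sv) (t := Sw)
    have hb := Finset.card_le_card hsub1
    omega
  have h2 : Sw.card ≤ Sv.card + 3 := by
    have ha := Finset.card_le_card_sdiff_add_card (s := Sw) (t := Sv)
    have hb := Finset.card_le_card hsub2
    omega
  rw [hanum v, hanum w, ← hSv, ← hSw]
  rw [abs_sub_le_iff]
  constructor
  · have := (Nat.cast_le (α := ℝ)).mpr h1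
    push_cast at this
    linarith
  · have := (Nat.cast_le (α := ℝ)).mpr h2
    push_cast at this
    linarith

lemma measurable_anum (L : ℕ) (i : Fin K) :
    Measurable fun ω : PropSpace K M n x => (Anum L i ω : ℝ) := by
  classical
  have hcond : ∀ p q : PropIdx K n x,
      MeasurableSet {ω : PropSpace K M n x | (ω q).1 = (ω p).1 ∧ (ω p).2 < (ω q).2} := by
    intro p q
    have e1 : MeasurableSet {ω : PropSpace K M n x | (ω q).1 = (ω p).1} := by
      have hset : {ω : PropSpace K M n x | (ω q).1 = (ω p).1}
          = ⋃ u : Fin (M * n), ((fun ω : PropSpace K M n x => (ω q).1) ⁻¹' {u})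
              ∩ ((fun ω : PropSpace K M n x => (ω p).1) ⁻¹' {u}) := by
        ext ω
        simp only [Set.mem_setOf_eq, Set.mem_iUnion, Set.mem_inter_iff, Set.mem_preimage,
          Set.mem_singleton_iff]
        exact ⟨fun h => ⟨(ω p).1, h, rfl⟩, fun ⟨u, h1, h2⟩ => h1.trans h2.symm⟩
      rw [hset]
      exact MeasurableSet.iUnion fun u =>
        (((measurable_pi_apply q).fst) (measurableSet_singleton u)).inter
          (((measurable_pi_apply p).fst) (measurableSet_singleton u))
    have e2 : MeasurableSet {ω : PropSpace K M n x | (ω p).2 < (ω q).2} :=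
      measurableSet_lt ((measurable_pi_apply p).snd) ((measurable_pi_apply q).snd)
    have : {ω : PropSpace K M n x | (ω q).1 = (ω p).1 ∧ (ω p).2 < (ω q).2}
        = {ω : PropSpace K M n x | (ω q).1 = (ω p).1}
          ∩ {ω : PropSpace K M n x | (ω p).2 < (ω q).2} := rfl
    rw [this]
    exact e1.inter e2
  have hacc : ∀ p : PropIdx K n x,
      MeasurableSet {ω : PropSpace K M n x | PropAccepted L ω p} := by
    intro p
    have hcount : Measurable fun ω : PropSpace K M n x =>
        ∑ q : PropIdx K n x,
          (if (ω q).1 = (ω p).1 ∧ (ω p).2 < (ω q).2 then (1 : ℝ) else 0) :=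
      Finset.measurable_sum _ fun q _ =>
        Measurable.ite (hcond p q) measurable_const measurable_const
    have hset : {ω : PropSpace K M n x | PropAccepted L ω p}
        = {ω : PropSpace K M n x |
            (∑ q : PropIdx K n x,
              if (ω q).1 = (ω p).1 ∧ (ω p).2 < (ω q).2 then (1 : ℝ) else 0) < (L : ℝ)} := by
      ext ω
      simp only [Set.mem_setOf_eq]
      unfold PropAccepted
      rw [Finset.card_filter]
      rw [show (∑ q : PropIdx K n x,
          if (ω q).1 = (ω p).1 ∧ (ω p).2 < (ω q).2 then (1 : ℝ) else 0)
        = ((∑ q : PropIdx K n x,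
          if (ω q).1 = (ω p).1 ∧ (ω p).2 < (ω q).2 then (1 : ℕ) else 0 : ℕ) : ℝ) by
          push_cast; rfl]
      exact (Nat.cast_lt (α := ℝ)).symm
    rw [hset]
    exact measurableSet_lt hcount measurable_const
  have hrepr : (fun ω : PropSpace K M n x => (Anum L i ω : ℝ))
      = fun ω => ∑ p : PropIdx K n x,
          if p.1 = i ∧ PropAccepted L ω p then (1 : ℝ) else 0 := by
    funext ω
    unfold Anum
    rw [Finset.card_filter]
    push_cast
    rfl
  rw [hrepr]
  apply Finset.measurable_sum
  intro p _
  by_cases hpi : p.1 = i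
  · simp only [hpi, true_and]
    exact Measurable.ite (hacc p) measurable_const measurable_const
  · simp only [hpi, false_and, if_false]
    exact measurable_const

end Comb

open Filter in
/-- Concentration of the numbers of accepted proposals: in the proposal process with
rate vector `x ∈ [0,1]^K`, for every `ε > 0` the probability that the number of
accepted type-`i` proposals deviates from its expectation `f_i(x)·n` by at least `ε n`
for some `i` tends to `0` as `n → ∞`. -/
theorem accepted_proposals_concentration
    (K L M : ℕ) (hK : 0 < K) (hL : 0 < L) (hM : 0 < M)
    (D D' : Measure ℝ) [IsProbabilityMeasure D] [IsProbabilityMeasure D']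
    [NullSingletonClass D] [NullSingletonClass D']
    (x : Fin K → ℝ) (hx : ∀ i, x i ∈ Set.Icc (0 : ℝ) 1) (ε : ℝ) (hε : 0 < ε) :
    Tendsto (fun n : ℕ =>
        propMeasure K M n D D' x {ω : PropSpace K M n x |
          ∃ i : Fin K,
            ε * n ≤ |(Anum L i ω : ℝ) -
              (∫⁻ ω', (Anum L i ω' : ℝ≥0∞) ∂(propMeasure K M n D D' x)).toReal|})
      atTop (nhds 0) := by
  classical
  set Cc : ℝ := 9 / 2 * (K : ℝ) ^ 2 / ε ^ 2 with hCc
  have key : ∀ n : ℕ, 1 ≤ n →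
      propMeasure K M n D D' x {ω : PropSpace K M n x |
          ∃ i : Fin K,
            ε * n ≤ |(Anum L i ω : ℝ) -
              (∫⁻ ω', (Anum L i ω' : ℝ≥0∞) ∂(propMeasure K M n D D' x)).toReal|}
        ≤ ENNReal.ofReal (Cc / n) := by
    intro n hn
    have hn0 : (0 : ℝ) < n := by exact_mod_cast hn
    haveI : Nonempty (Fin (M * n)) := ⟨⟨0, Nat.mul_pos hM hn⟩⟩
    haveI hunif : IsProbabilityMeasure (unifFin (Fin (M * n))) := by
      constructor
      rw [unifFin, Measure.smul_apply, smul_eq_mul, Measure.count_univ, ENat.card_eq_coe_fintype_card,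
        ENat.toENNReal_coe]
      exact ENNReal.inv_mul_cancel (by exact_mod_cast Fintype.card_ne_zero (α := Fin (M * n)))
        (ENNReal.natCast_ne_top _)
    set μf : PropIdx K n x → Measure (Fin (M * n) × ℝ) :=
      fun p => (unifFin (Fin (M * n))).prod (if (p.1 : ℕ) = 0 then D else D') with hμf
    haveI hprobf : ∀ p, IsProbabilityMeasure (μf p) := fun p => by
      rw [hμf]
      dsimp only
      split_ifs <;> infer_instance
    have hPdef : propMeasure K M n D D' x = Measure.pi μf := rfl
    haveI : IsProbabilityMeasure (propMeasure K M n D D' x) := by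
      rw [hPdef]
      infer_instance
    set P := propMeasure K M n D D' x with hP
    -- bound for Anum
    set Nc := Fintype.card (PropIdx K n x) with hNc
    have hbound : ∀ (i : Fin K) (ω : PropSpace K M n x), |(Anum L i ω : ℝ)| ≤ (Nc : ℝ) := by
      intro i ω
      rw [abs_of_nonneg (Nat.cast_nonneg _)]
      have : Anum L i ω ≤ Nc := by
        rw [hNc, ← Finset.card_univ]
        exact Finset.card_filter_le _ _
      exact_mod_cast this
    have hNcle : (Nc : ℝ) ≤ (K : ℝ) * n := by
      have : Nc ≤ K * n := by
        rw [hNc]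
        rw [Fintype.card_sigma]
        calc ∑ i : Fin K, Fintype.card (Fin ⌊x i * n⌋₊)
            ≤ ∑ _i : Fin K, n := by
              refine Finset.sum_le_sum fun i _ => ?_
              rw [Fintype.card_fin]
              calc ⌊x i * n⌋₊ ≤ ⌊(n : ℝ)⌋₊ :=
                    Nat.floor_mono (by
                      have := (hx i).2
                      have hn' : (0 : ℝ) ≤ n := Nat.cast_nonneg n
                      nlinarith)
                _ = n := Nat.floor_natCast n
          _ = K * n := by
              rw [Finset.sum_const, Finset.card_univ, Fintype.card_fin, smul_eq_mul]
      exact_mod_cast this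
    -- expectation rewriting
    have hexp : ∀ i : Fin K,
        (∫⁻ ω', (Anum L i ω' : ℝ≥0∞) ∂P).toReal = ∫ ω, (Anum L i ω : ℝ) ∂P := by
      intro i
      rw [integral_eq_lintegral_of_nonneg_ae
        (Eventually.of_forall fun ω => Nat.cast_nonneg _)
        (measurable_anum L i).aestronglyMeasurable]
      congr 1
      refine lintegral_congr fun ω => ?_
      rw [ENNReal.ofReal_natCast]
    -- good event and Efron–Stein
    have hfib : ∀ (a : PropIdx K n x ⊕ PropIdx K n x) (t : ℝ),
        Sum.elim μf μf a {y | y.2 = t} = 0 := by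
      have hfib' : ∀ (p : PropIdx K n x) (t : ℝ), μf p {y | y.2 = t} = 0 := by
        intro p t
        rw [hμf]
        dsimp only
        haveI : IsProbabilityMeasure (if (p.1 : ℕ) = 0 then D else D') := by
          split_ifs <;> infer_instance
        have hset : {y : Fin (M * n) × ℝ | y.2 = t} = Set.univ ×ˢ ({t} : Set ℝ) := by
          ext y
          simp only [Set.mem_setOf_eq, Set.mem_prod, Set.mem_univ, true_and,
            Set.mem_singleton_iff]
        rw [hset, Measure.prod_prod]
        have : (if (p.1 : ℕ) = 0 then D else D') ({t} : Set ℝ) = 0 := by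
          split_ifs <;> exact measure_singleton t
        rw [this, mul_zero]
      rintro (p | p) t <;> exact hfib' p t
    haveI hprobSum : ∀ a : PropIdx K n x ⊕ PropIdx K n x,
        IsProbabilityMeasure (Sum.elim μf μf a) := fun a => by
      cases a <;> (dsimp only [Sum.elim_inl, Sum.elim_inr]; exact hprobf _)
    have hvar : ∀ i : Fin K,
        (∫ ω, (Anum L i ω : ℝ) ^ 2 ∂P) - (∫ ω, (Anum L i ω : ℝ) ∂P) ^ 2
          ≤ (K : ℝ) * n * 9 / 2 := by
      intro i
      have hbd : ∀ᵐ θ ∂Measure.pi (Sum.elim μf μf),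
          ∀ (s s' : PropIdx K n x → Bool) (k : PropIdx K n x),
            (∀ j, j ≠ k → s j = s' j) →
            |(fun ω : PropSpace K M n x => (Anum L i ω : ℝ)) (pickSel s θ)
              - (fun ω : PropSpace K M n x => (Anum L i ω : ℝ)) (pickSel s' θ)| ≤ 3 := by
        filter_upwards [ae_inj_snd (Sum.elim μf μf) hfib] with θ hθ s s' k hss'
        refine anum_diff_le L i (pickSel s θ) (pickSel s' θ) k ?_ ?_ ?_
        · intro p hp
          simp only [pickSel]
          rw [show gsel s p = gsel s' p by unfold gsel; rw [hss' p hp]]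
        · intro p p' hpp'
          exact gsel_injective s (hθ hpp')
        · intro p p' hpp'
          exact gsel_injective s' (hθ hpp')
      have hES := efron_stein μf (fun ω : PropSpace K M n x => (Anum L i ω : ℝ))
        (measurable_anum L i) (Nc : ℝ) (hbound i) 3 (by norm_num) hbd
      rw [← hPdef] at hES
      calc (∫ ω, (Anum L i ω : ℝ) ^ 2 ∂P) - (∫ ω, (Anum L i ω : ℝ) ∂P) ^ 2
          ≤ (Nc : ℝ) * 3 ^ 2 / 2 := hES
        _ ≤ (K : ℝ) * n * 9 / 2 := by nlinarith [hNcle]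
    -- Chebyshev per type
    have hi : ∀ i : Fin K,
        P {ω | ε * n ≤ |(Anum L i ω : ℝ) - ∫ ω', (Anum L i ω' : ℝ) ∂P|}
          ≤ ENNReal.ofReal (((K : ℝ) * n * 9 / 2) / (ε * n) ^ 2) := by
      intro i
      exact chebyshev_bdd P (fun ω => (Anum L i ω : ℝ)) (measurable_anum L i)
        (Nc : ℝ) (hbound i) (mul_pos hε hn0) (hvar i)
    -- union bound
    calc P {ω : PropSpace K M n x |
          ∃ i : Fin K,
            ε * n ≤ |(Anum L i ω : ℝ) -
              (∫⁻ ω', (Anum L i ω' : ℝ≥0∞) ∂P).toReal|}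
        ≤ P (⋃ i : Fin K,
            {ω | ε * n ≤ |(Anum L i ω : ℝ) - ∫ ω', (Anum L i ω' : ℝ) ∂P|}) := by
          refine measure_mono fun ω hω => ?_
          obtain ⟨i, hi'⟩ := hω
          refine Set.mem_iUnion.mpr ⟨i, ?_⟩
          rwa [← hexp i]
      _ ≤ ∑' i : Fin K,
            P {ω | ε * n ≤ |(Anum L i ω : ℝ) - ∫ ω', (Anum L i ω' : ℝ) ∂P|} :=
          measure_iUnion_le _
      _ ≤ ∑' _i : Fin K, ENNReal.ofReal (((K : ℝ) * n * 9 / 2) / (ε * n) ^ 2) :=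
          ENNReal.tsum_le_tsum fun i => hi i
      _ = (K : ℝ≥0∞) * ENNReal.ofReal (((K : ℝ) * n * 9 / 2) / (ε * n) ^ 2) := by
          rw [tsum_fintype, Finset.sum_const, Finset.card_univ, Fintype.card_fin, nsmul_eq_mul]
      _ ≤ ENNReal.ofReal (Cc / n) := by
          rw [← ENNReal.ofReal_natCast K, ← ENNReal.ofReal_mul (Nat.cast_nonneg K)]
          apply ENNReal.ofReal_le_ofReal
          have heq : (K : ℝ) * (((K : ℝ) * n * 9 / 2) / (ε * n) ^ 2) = Cc / n := by
            rw [hCc]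
            field_simp
          rw [heq]
  -- conclude by squeezing
  have h0 : Tendsto (fun n : ℕ => ENNReal.ofReal (Cc / n)) atTop (nhds 0) := by
    have h := tendsto_const_div_atTop_nhds_zero_nat Cc
    have h2 := ENNReal.tendsto_ofReal (f := atTop) h
    simpa using h2
  refine tendsto_of_tendsto_of_tendsto_of_le_of_le' tendsto_const_nhds h0 ?_ ?_
  · exact Eventually.of_forall fun n => zero_le
  · filter_upwards [eventually_ge_atTop 1] with n hn
    exact key n hn
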